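/- If a Banach-space valued continuous process X is mean square almost periodic and Z is a (deterministic) limit in L² of X_{t_n} along some sequence t_n → ∞ with the properties that Z must simultaneously be almost surely constant and have E‖Z‖² ≥ c > 0 with E[Z] = 0, then a contradiction arises; hence no process can satisfy both the decorrelation property (Cov(⟨x*,X_s⟩,⟨x*,X_t⟩) → 0 as |t−s| → ∞) and a uniform lower variance bound inf_t Var(‖X_t‖) ≥ c > 0 while being mean square almost periodic. -/

import Mathlib

open MeasureTheory ProbabilityTheory Filter

open Topology

noncomputable section

set_option linter.unusedSectionVars false

/-- Covariance of two real random variables. -/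
def cov {Ω : Type*} [MeasurableSpace Ω] (P : Measure Ω) (X Y : Ω → ℝ) : ℝ :=
  ∫ ω, (X ω - ∫ a, X a ∂P) * (Y ω - ∫ a, Y a ∂P) ∂P

/-- Bohr almost periodicity for a function into a (pseudo)metric space. -/
def BohrAlmostPeriodic {α : Type*} [PseudoMetricSpace α] (f : ℝ → α) : Prop :=
  ∀ ε > 0, ∃ l > 0, ∀ a : ℝ, ∃ τ ∈ Set.Icc a (a + l), ∀ t : ℝ,
    dist (f (t + τ)) (f t) ≤ ε

section Aux

variable {Ω : Type*} [MeasurableSpace Ω] {P : Measure Ω} [IsProbabilityMeasure P]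

local notation "⟪" x ", " y "⟫" => @inner ℝ _ _ x y

/-- constant one in L². -/
def oneL2 (P : Measure Ω) [IsProbabilityMeasure P] : Lp ℝ 2 P :=
  (memLp_const (1 : ℝ)).toLp _

lemma oneL2_coe : (oneL2 P : Ω → ℝ) =ᵐ[P] fun _ => 1 := MemLp.coeFn_toLp _

lemma inner_oneL2 (f : Lp ℝ 2 P) : ⟪f, oneL2 P⟫ = ∫ ω, f ω ∂P := by
  rw [L2.inner_def]
  refine integral_congr_ae ?_
  filter_upwards [oneL2_coe (P := P)] with ω hω
  rw [hω]
  simp [RCLike.inner_apply]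

lemma cov_congr {f f' g g' : Ω → ℝ} (h1 : f =ᵐ[P] f') (h2 : g =ᵐ[P] g') :
    cov P f g = cov P f' g' := by
  unfold cov
  rw [integral_congr_ae h1, integral_congr_ae h2]
  refine integral_congr_ae ?_
  filter_upwards [h1, h2] with ω e1 e2
  rw [e1, e2]

lemma cov_eq_inner (f g : Lp ℝ 2 P) :
    cov P f g = ⟪f - (∫ ω, f ω ∂P) • oneL2 P, g - (∫ ω, g ω ∂P) • oneL2 P⟫ := by
  rw [L2.inner_def]
  refine integral_congr_ae ?_
  filter_upwards [oneL2_coe (P := P), Lp.coeFn_sub f ((∫ ω, f ω ∂P) • oneL2 P),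
    Lp.coeFn_sub g ((∫ ω, g ω ∂P) • oneL2 P),
    Lp.coeFn_smul (∫ ω, f ω ∂P) (oneL2 P), Lp.coeFn_smul (∫ ω, g ω ∂P) (oneL2 P)]
    with ω h1 hf hg hf2 hg2
  rw [hf, hg]
  simp [RCLike.inner_apply, hf2, hg2, h1]
  ring

lemma tendsto_cov' {u u' : ℕ → Lp ℝ 2 P} {v v' : Lp ℝ 2 P}
    (h : Tendsto u atTop (𝓝 v)) (h' : Tendsto u' atTop (𝓝 v')) :
    Tendsto (fun n => cov P (u n) (u' n)) atTop (𝓝 (cov P v v')) := by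
  have hctr : Continuous (fun f : Lp ℝ 2 P => f - (∫ ω, f ω ∂P) • oneL2 P) := by
    have h1 : (fun f : Lp ℝ 2 P => ∫ ω, f ω ∂P) = fun f => ⟪f, oneL2 P⟫ :=
      funext fun f => (inner_oneL2 f).symm
    refine continuous_id.sub (Continuous.fun_smul ?_ continuous_const)
    rw [h1]
    exact continuous_id.inner continuous_const
  simp only [cov_eq_inner]
  exact ((hctr.tendsto v).comp h).inner ((hctr.tendsto v').comp h')

/-- If `cov P f f = 0` for an L² element `f`, then `f` is a.e. constant. -/
lemma ae_const_of_cov_self_eq_zero {f : Lp ℝ 2 P} (h : cov P f f = 0) :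
    (f : Ω → ℝ) =ᵐ[P] fun _ => ∫ ω, f ω ∂P := by
  rw [cov_eq_inner, inner_self_eq_zero, sub_eq_zero] at h
  have key : (f : Ω → ℝ) =ᵐ[P] (((∫ ω, f ω ∂P) • oneL2 P : Lp ℝ 2 P) : Ω → ℝ) := by
    rw [← h]
  filter_upwards [key, oneL2_coe (P := P), Lp.coeFn_smul (∫ ω, f ω ∂P) (oneL2 P)]
    with ω h0 h1 h2
  rw [h0, h2]
  simp [h1]

variable {E : Type*} [NormedAddCommGroup E] [MeasurableSpace E]

/-- the pointwise-norm map on L². -/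
def nLp (f : Lp E 2 P) : Lp ℝ 2 P := ((Lp.memLp f).norm).toLp _

lemma nLp_coe (f : Lp E 2 P) : (nLp f : Ω → ℝ) =ᵐ[P] fun ω => ‖f ω‖ := MemLp.coeFn_toLp _

lemma nLp_lip (f g : Lp E 2 P) : dist (nLp f) (nLp g) ≤ dist f g := by
  rw [Lp.dist_def, Lp.dist_def]
  refine ENNReal.toReal_mono ?_ ?_
  · exact ((Lp.memLp f).sub (Lp.memLp g)).eLpNorm_ne_top
  · refine eLpNorm_mono_ae ?_
    filter_upwards [nLp_coe f, nLp_coe g] with ω h1 h2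
    simp only [Pi.sub_apply, h1, h2, Real.norm_eq_abs]
    exact abs_norm_sub_norm_le _ _

lemma nLp_continuous : Continuous (nLp (P := P) (E := E)) :=
  (LipschitzWith.of_dist_le_mul (K := 1) fun f g => by
    rw [NNReal.coe_one, one_mul]; exact nLp_lip f g).continuous

lemma variance_eq_cov {Y : Ω → ℝ} (hY : MemLp Y 2 P) : variance Y P = cov P Y Y := by
  rw [variance_eq_integral hY.aemeasurable]
  refine integral_congr_ae (Filter.Eventually.of_forall fun ω => ?_)
  simp [pow_two]

lemma cov_const_zero (a : ℝ) : cov P (fun _ => a) (fun _ => a) = 0 := by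
  unfold cov
  simp

lemma strictMono_add_le {φ : ℕ → ℕ} (hφ : StrictMono φ) (n k : ℕ) :
    φ n + k ≤ φ (n + k) := by
  induction k with
  | zero => simp
  | succ k ih =>
    have h1 : φ (n + k) < φ (n + k + 1) := hφ (Nat.lt_succ_self _)
    have h2 : n + (k + 1) = n + k + 1 := by omega
    rw [h2]
    omega

end Aux

/-- No continuous `L²`-process with uniformly integrable squared norms can
simultaneously satisfy the decorrelation property
(`Cov(⟨x*,X_s⟩, ⟨x*,X_t⟩) → 0` as `|t - s| → ∞`) and the uniform variance lower
bound `Var ‖X_t‖ ≥ c > 0` while being mean square almost periodic. -/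
theorem stmt12 {Ω : Type*} [MeasurableSpace Ω] (P : Measure Ω) [IsProbabilityMeasure P]
    {E : Type*} [NormedAddCommGroup E] [NormedSpace ℝ E] [CompleteSpace E]
    [SecondCountableTopology E] [MeasurableSpace E] [BorelSpace E]
    [Fact ((1 : ENNReal) ≤ 2)]
    (X : ℝ → Lp E 2 P) (hXcont : Continuous X)
    (hui : UnifIntegrable (fun t ω => ‖X t ω‖ ^ 2) 1 P)
    (hdecor : ∀ (xstar : E →L[ℝ] ℝ), ∀ ε > (0 : ℝ), ∃ T : ℝ, ∀ s t : ℝ, T ≤ |t - s| →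
      |cov P (fun ω => xstar (X s ω)) (fun ω => xstar (X t ω))| ≤ ε)
    (c : ℝ) (hc : 0 < c)
    (hvar : ∀ t : ℝ, c ≤ variance (fun ω => ‖X t ω‖) P) :
    ¬ BohrAlmostPeriodic X := by
  intro hap
  -- Step 1: the range of X is totally bounded, hence has compact closure
  have htb : TotallyBounded (Set.range X) := by
    rw [Metric.totallyBounded_iff]
    intro ε hε
    obtain ⟨l, hl, hτ⟩ := hap (ε / 3) (by positivity)
    have hc1 : IsCompact (X '' Set.Icc 0 l) := isCompact_Icc.image hXcont
    obtain ⟨t0, ht0fin, ht0⟩ :=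
      Metric.totallyBounded_iff.mp hc1.totallyBounded (ε / 3) (by positivity)
    refine ⟨t0, ht0fin, ?_⟩
    rintro _ ⟨t, rfl⟩
    obtain ⟨τ, hτmem, hdist⟩ := hτ (-t)
    have hmem : X (t + τ) ∈ X '' Set.Icc 0 l :=
      ⟨t + τ, ⟨by linarith [hτmem.1], by linarith [hτmem.2]⟩, rfl⟩
    obtain ⟨y, hy, hxy⟩ := Set.mem_iUnion₂.mp (ht0 hmem)
    refine Set.mem_iUnion₂.mpr ⟨y, hy, ?_⟩
    have h1 : dist (X (t + τ)) (X t) ≤ ε / 3 := hdist t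
    have h2 : dist (X (t + τ)) y < ε / 3 := hxy
    have h0 : dist (X t) y ≤ dist (X t) (X (t + τ)) + dist (X (t + τ)) y := dist_triangle _ _ _
    have h1' : dist (X t) (X (t + τ)) = dist (X (t + τ)) (X t) := dist_comm _ _
    rw [Metric.mem_ball]
    linarith
  have hK : IsCompact (closure (Set.range X)) :=
    htb.closure.isCompact_of_isClosed isClosed_closure
  -- Step 2: extract a convergent subsequence along the integers
  obtain ⟨Z, hZmem, φ, hφ, hconv⟩ :=
    hK.tendsto_subseq (x := fun n : ℕ => X (n : ℝ))
      (fun n => subset_closure (Set.mem_range_self _))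
  have hconv : Tendsto (fun n => X ((φ n : ℕ) : ℝ)) atTop (𝓝 Z) := hconv
  have h2n : Tendsto (fun n : ℕ => 2 * n) atTop atTop :=
    tendsto_atTop_mono (fun n => by simp only [id_eq]; omega) tendsto_id
  have hconv2 : Tendsto (fun n => X ((φ (2 * n) : ℕ) : ℝ)) atTop (𝓝 Z) := hconv.comp h2n
  -- Step 3: Z is a.e. constant
  have hZint : Integrable (Z : Ω → E) P := (Lp.memLp Z).integrable one_le_two
  set m : E := ∫ ω, Z ω ∂P with hm
  have hZconst : ∀ᵐ ω ∂P, Z ω = m := by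
    have hdual : ∀ xstar : StrongDual ℝ E,
        (fun ω => xstar (Z ω - m)) =ᵐ[P] 0 := by
      intro xstar
      set F : Lp E 2 P → Lp ℝ 2 P := fun f => xstar.compLpL 2 P f with hF
      have hFcont : Continuous F := (xstar.compLpL 2 P).continuous
      have hFcoe : ∀ f : Lp E 2 P, (F f : Ω → ℝ) =ᵐ[P] fun ω => xstar (f ω) :=
        fun f => xstar.coeFn_compLpL f
      -- covariances along the subsequences tend to cov(F Z, F Z)
      have h1 : Tendsto (fun n => cov P (F (X ((φ n : ℕ) : ℝ))) (F (X ((φ (2 * n) : ℕ) : ℝ))))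
          atTop (𝓝 (cov P (F Z) (F Z))) :=
        tendsto_cov' ((hFcont.tendsto Z).comp hconv) ((hFcont.tendsto Z).comp hconv2)
      -- and also tend to 0 by decorrelation
      have h2 : Tendsto (fun n => cov P (F (X ((φ n : ℕ) : ℝ))) (F (X ((φ (2 * n) : ℕ) : ℝ))))
          atTop (𝓝 0) := by
        rw [Metric.tendsto_atTop]
        intro ε hε
        obtain ⟨T, hT⟩ := hdecor xstar (ε / 2) (by positivity)
        obtain ⟨N, hN⟩ := exists_nat_ge T
        refine ⟨N, fun n hn => ?_⟩
        have hgap : (N : ℝ) ≤ |((φ (2 * n) : ℕ) : ℝ) - ((φ n : ℕ) : ℝ)| := by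
          have h3 : φ n + n ≤ φ (2 * n) := by
            have := strictMono_add_le hφ n n
            rw [two_mul]
            omega
          have h6 : N + φ n ≤ φ (2 * n) := by
            have : n ≤ φ n := hφ.le_apply
            omega
          have h7 : ((N + φ n : ℕ) : ℝ) ≤ ((φ (2 * n) : ℕ) : ℝ) := Nat.cast_le.mpr h6
          push_cast at h7
          rw [abs_of_nonneg (by linarith)]
          linarith
        have hcov := hT _ _ (hN.trans hgap)
        rw [Real.dist_eq, sub_zero]
        calc |cov P (F (X ((φ n : ℕ) : ℝ))) (F (X ((φ (2 * n) : ℕ) : ℝ)))|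
            = |cov P (fun ω => xstar (X ((φ n : ℕ) : ℝ) ω))
                (fun ω => xstar (X ((φ (2 * n) : ℕ) : ℝ) ω))| := by
              rw [cov_congr (hFcoe _) (hFcoe _)]
          _ ≤ ε / 2 := hcov
          _ < ε := by linarith
      have hzero : cov P (F Z) (F Z) = 0 := tendsto_nhds_unique h1 h2
      have hconst := ae_const_of_cov_self_eq_zero hzero
      have hint : ∫ ω, (F Z : Ω → ℝ) ω ∂P = xstar m := by
        rw [integral_congr_ae (hFcoe Z), hm, ← xstar.integral_comp_comm hZint]
      filter_upwards [hconst, hFcoe Z] with ω h1 h2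
      simp only [Pi.zero_apply, map_sub]
      rw [← h2, h1, hint]
      ring
    have := ae_eq_zero_of_forall_dual ℝ (f := fun ω => Z ω - m) hdual
    filter_upwards [this] with ω h
    simpa [sub_eq_zero] using h
  -- Step 4: variances of the norms converge to 0, contradiction
  have hvconv : Tendsto (fun n => cov P (nLp (X ((φ n : ℕ) : ℝ))) (nLp (X ((φ n : ℕ) : ℝ))))
      atTop (𝓝 (cov P (nLp Z) (nLp Z))) :=
    tendsto_cov' ((nLp_continuous.tendsto Z).comp hconv) ((nLp_continuous.tendsto Z).comp hconv)
  have hnZ : cov P (nLp Z) (nLp Z) = 0 := by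
    have heq : (nLp Z : Ω → ℝ) =ᵐ[P] fun _ => ‖m‖ := by
      filter_upwards [nLp_coe Z, hZconst] with ω h1 h2
      rw [h1, h2]
    rw [cov_congr heq heq, cov_const_zero]
  have hlow : ∀ n, c ≤ cov P (nLp (X ((φ n : ℕ) : ℝ))) (nLp (X ((φ n : ℕ) : ℝ))) := by
    intro n
    have h1 := hvar ((φ n : ℕ) : ℝ)
    rw [variance_eq_cov (Lp.memLp _).norm] at h1
    calc c ≤ cov P (fun ω => ‖X ((φ n : ℕ) : ℝ) ω‖) (fun ω => ‖X ((φ n : ℕ) : ℝ) ω‖) := h1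
      _ = cov P (nLp (X ((φ n : ℕ) : ℝ))) (nLp (X ((φ n : ℕ) : ℝ))) :=
        (cov_congr (nLp_coe _) (nLp_coe _)).symm
  have : c ≤ 0 := hnZ ▸ ge_of_tendsto hvconv (Filter.Eventually.of_forall hlow)
  linarith
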